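/- Let n > 1 and let k be an integer with 1 ≤ k < z_1(n). Then z_1(n − k) ≤ 2k. -/

import Mathlib

/-- `IsZeck n l` says that `l` is the Zeckendorf representation of `n`, recorded as the
list of indices of the Fibonacci parts in increasing order: every index is at least `2`,
consecutive indices differ by at least `2` (no two consecutive Fibonacci numbers), and the
corresponding Fibonacci numbers sum to `n`.  The parts of the Zeckendorf representation in
increasing order are then `z₁(n) = Nat.fib l.headI`, `z₂(n) = Nat.fib (l.getD 1 0)`, etc. -/
def IsZeck (n : ℕ) (l : List ℕ) : Prop :=
  (∀ i ∈ l, 2 ≤ i) ∧ l.Chain' (fun a b => a + 2 ≤ b) ∧ (l.map Nat.fib).sum = n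

local instance : IsTrans ℕ fun a b => b + 2 ≤ a where
  trans _a _b _c hba hcb := hcb.trans <| le_self_add.trans hba

lemma list_headI_mem : ∀ {l : List ℕ}, l ≠ [] → l.headI ∈ l
  | a :: t, _ => List.mem_cons_self

lemma list_head_eq_headI : ∀ {l : List ℕ} (h : l ≠ []), l.head h = l.headI
  | _ :: _, _ => rfl

lemma isZeck_rev {n : ℕ} {l : List ℕ} (h : IsZeck n l) :
    List.IsZeckendorfRep l.reverse := by
  obtain ⟨h2, hc, -⟩ := h
  unfold List.IsZeckendorfRep
  rw [show l.reverse ++ [0] = (0 :: l).reverse by simp, List.isChain_reverse]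
  refine List.isChain_cons.2 ⟨fun y hy => ?_, hc⟩
  exact h2 y (List.mem_of_mem_head? hy)

lemma isZeck_unique {n : ℕ} {l1 l2 : List ℕ} (h1 : IsZeck n l1) (h2 : IsZeck n l2) :
    l1 = l2 := by
  have e1 := Nat.zeckendorf_sum_fib (isZeck_rev h1)
  have e2 := Nat.zeckendorf_sum_fib (isZeck_rev h2)
  rw [List.map_reverse, List.sum_reverse, h1.2.2] at e1
  rw [List.map_reverse, List.sum_reverse, h2.2.2] at e2
  have : l1.reverse = l2.reverse := e1.symm.trans e2
  simpa using congrArg List.reverse this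

lemma isZeck_zeckendorf (k : ℕ) : IsZeck k (Nat.zeckendorf k).reverse := by
  have hrep := Nat.isZeckendorfRep_zeckendorf k
  unfold List.IsZeckendorfRep at hrep
  refine ⟨fun i hi => ?_, ?_, ?_⟩
  · rw [List.mem_reverse] at hi
    -- chain' on (zeckendorf k ++ [0]) with a decreasing relation: get 2 ≤ i
    have : (Nat.zeckendorf k ++ [0]).Pairwise (fun a b => b + 2 ≤ a) := by
      refine List.isChain_iff_pairwise.1 hrep
    have := (List.pairwise_append.1 this).2.2 i hi 0 (by simp)
    omega
  · have hc : (Nat.zeckendorf k).Chain' (fun a b => b + 2 ≤ a) :=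
      ((List.isChain_append.1 hrep).1)
    show List.IsChain _ _
    rw [List.isChain_reverse]
    exact hc
  · rw [List.map_reverse, List.sum_reverse, Nat.sum_zeckendorf_fib]

lemma fib_mem_le_sum {l : List ℕ} {i : ℕ} (hi : i ∈ l) :
    Nat.fib i ≤ (l.map Nat.fib).sum :=
  List.single_le_sum (fun _ _ => Nat.zero_le _) _ (List.mem_map_of_mem hi)

/-- Let `n > 1` and let `k` be an integer with `1 ≤ k < z₁(n)`.  Then `z₁(n - k) ≤ 2k`. -/
theorem z1_sub_le_two_mul (n k : ℕ) (ln lm : List ℕ)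
    (hln : IsZeck n ln) (hlm : IsZeck (n - k) lm)
    (hn : 1 < n) (hk1 : 1 ≤ k) (hk2 : k < Nat.fib ln.headI) :
    Nat.fib lm.headI ≤ 2 * k := by
  by_contra h
  push_neg at h
  -- lm is nonempty
  have hlmne : lm ≠ [] := by
    intro he
    rw [he] at h
    simp [Nat.fib] at h
  have hbmem : lm.headI ∈ lm := list_headI_mem hlmne
  have hb2 : 2 ≤ lm.headI := hlm.1 _ hbmem
  -- ln is nonempty
  have hlnne : ln ≠ [] := by
    intro he
    have := hln.2.2
    rw [he] at this
    simp at this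
    omega
  have hamem : ln.headI ∈ ln := list_headI_mem hlnne
  -- k ≤ n
  have hkn : k ≤ n := by
    have := fib_mem_le_sum hamem
    rw [hln.2.2] at this
    omega
  -- k < fib (b - 1)
  obtain ⟨c, hbc⟩ : ∃ c, lm.headI = c + 2 := ⟨lm.headI - 2, by omega⟩
  rw [hbc] at h
  have hkfib : k < Nat.fib (c + 1) := by
    have h1 : Nat.fib (c + 2) = Nat.fib c + Nat.fib (c + 1) := Nat.fib_add_two
    have h2 : Nat.fib c ≤ Nat.fib (c + 1) := Nat.fib_le_fib_succ
    omega
  -- Zeckendorf rep of k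
  set lk := (Nat.zeckendorf k).reverse with hlk
  have hzk : IsZeck k lk := isZeck_zeckendorf k
  have hlkne : lk ≠ [] := by
    intro he
    have := hzk.2.2
    rw [he] at this
    simp at this
    omega
  -- the last element of lk is at most c
  have hlast : ∀ x ∈ lk.getLast?, ∀ y ∈ lm.head?, x + 2 ≤ y := by
    intro x hx y hy
    have hxmem : x ∈ lk := List.mem_of_mem_getLast? hx
    have hfx : Nat.fib x ≤ k := by
      have := fib_mem_le_sum hxmem
      rwa [hzk.2.2] at this
    have hy' : y = c + 2 := by
      rw [List.head?_eq_head hlmne] at hy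
      simp only [Option.mem_some_iff] at hy
      rw [← hy, list_head_eq_headI hlmne, hbc]
    subst hy'
    by_contra hcon
    push_neg at hcon
    have : Nat.fib (c + 1) ≤ Nat.fib x := Nat.fib_mono (by omega)
    omega
  -- lk ++ lm is a Zeckendorf rep of n
  have hzn : IsZeck n (lk ++ lm) := by
    refine ⟨fun i hi => ?_, ?_, ?_⟩
    · rcases List.mem_append.1 hi with hi | hi
      · exact hzk.1 i hi
      · exact hlm.1 i hi
    · exact List.isChain_append.2 ⟨hzk.2.1, hlm.2.1, hlast⟩
    · rw [List.map_append, List.sum_append, hzk.2.2, hlm.2.2]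
      omega
  have := isZeck_unique hln hzn
  -- so ln.headI = lk.headI, whose fib is ≤ k
  have hhead : ln.headI = lk.headI := by
    rw [this]
    rcases lk with _ | ⟨x, xs⟩
    · exact absurd rfl hlkne
    · simp
  have : Nat.fib lk.headI ≤ k := by
    have := fib_mem_le_sum (list_headI_mem hlkne)
    rwa [hzk.2.2] at this
  rw [hhead] at hk2
  omega
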